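/- Let f : [0,t] → ℝ be continuously differentiable with α-Hölder continuous derivative for some α ∈ (0,1]. Then the sup-norm of the derivative satisfies ‖f'‖_{L^∞(0,t)} ≤ 4 ‖f‖_{L^∞(0,t)} · max{ t^{-1}, ‖f‖_{L^∞(0,t)}^{-1/(1+α)} · [f']_{C^α(0,t)}^{1/(1+α)} }, where [f']_{C^α} denotes the best α-Hölder constant of f' on [0,t]. -/

import Mathlib

/-- C^{1,α} interpolation inequality: for f C¹ on [0,t] with α-Hölder derivative
(with Hölder constant H), the sup of the derivative is controlled by
4‖f‖_∞ · max(t⁻¹, ‖f‖_∞^{-1/(1+α)} H^{1/(1+α)}). -/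
theorem stmt0 (t α : ℝ) (ht : 0 < t) (hα0 : 0 < α) (hα1 : α ≤ 1)
    (f f' : ℝ → ℝ) (H : ℝ) (hH : 0 ≤ H)
    (hderiv : ∀ s ∈ Set.Icc (0 : ℝ) t, HasDerivAt f (f' s) s)
    (hholder : ∀ s ∈ Set.Icc (0 : ℝ) t, ∀ r ∈ Set.Icc (0 : ℝ) t,
      |f' s - f' r| ≤ H * |s - r| ^ α) :
    (⨆ s : Set.Icc (0 : ℝ) t, |f' s|) ≤
      4 * (⨆ s : Set.Icc (0 : ℝ) t, |f s|) *
        max t⁻¹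
          ((⨆ s : Set.Icc (0 : ℝ) t, |f s|) ^ (-(1 / (1 + α))) *
            H ^ (1 / (1 + α))) := by
  have h1α : (0:ℝ) < 1 + α := by linarith
  have hne : Nonempty (Set.Icc (0 : ℝ) t) := ⟨⟨0, le_refl 0, ht.le⟩⟩
  set β : ℝ := 1 / (1 + α) with hβdef
  have hβ0 : 0 < β := by positivity
  have hβ1 : β ≤ 1 := by rw [hβdef, div_le_one h1α]; linarith
  set M : ℝ := ⨆ s : Set.Icc (0 : ℝ) t, |f s| with hMdef
  have hcont : ContinuousOn f (Set.Icc (0:ℝ) t) := fun s hs =>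
    (hderiv s hs).continuousAt.continuousWithinAt
  obtain ⟨C, hC⟩ := isCompact_Icc.exists_bound_of_continuousOn hcont
  have hbdd : BddAbove (Set.range fun s : Set.Icc (0:ℝ) t => |f s|) := by
    refine ⟨C, ?_⟩
    rintro x ⟨s, rfl⟩
    simpa using hC s s.2
  have hfle : ∀ s ∈ Set.Icc (0:ℝ) t, |f s| ≤ M := fun s hs =>
    le_ciSup hbdd ⟨s, hs⟩
  have hM0 : 0 ≤ M := (abs_nonneg (f 0)).trans (hfle 0 ⟨le_refl 0, ht.le⟩)
  -- key estimate : for any admissible window length h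
  have key : ∀ s ∈ Set.Icc (0:ℝ) t, ∀ h : ℝ, 0 < h → h ≤ t →
      |f' s| ≤ 2 * M / h + H * h ^ α := by
    intro s hs h hh0 hht
    set a : ℝ := min s (t - h) with hadef
    have ha0 : 0 ≤ a := le_min hs.1 (by linarith)
    have hah : a + h ≤ t := by
      have := min_le_right s (t - h); linarith
    have hsa : a ≤ s := min_le_left _ _
    have hsb : s ≤ a + h := by
      rcases le_or_gt s (t - h) with h1 | h1
      · have h2 : a = s := min_eq_left h1
        linarith
      · have h2 : a = t - h := min_eq_right h1.le
        have := hs.2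
        linarith
    have hab : a < a + h := by linarith
    have hsub : Set.Icc a (a + h) ⊆ Set.Icc (0:ℝ) t := Set.Icc_subset_Icc ha0 hah
    obtain ⟨ξ, hξ, hξeq⟩ := exists_hasDerivAt_eq_slope f f' hab (hcont.mono hsub)
      (fun x hx => hderiv x (hsub (Set.Ioo_subset_Icc_self hx)))
    have hξmem : ξ ∈ Set.Icc (0:ℝ) t := hsub (Set.Ioo_subset_Icc_self hξ)
    have hfb : |f (a + h)| ≤ M := hfle _ (hsub ⟨le_of_lt hab, le_refl _⟩)
    have hfa : |f a| ≤ M := hfle _ (hsub ⟨le_refl _, le_of_lt hab⟩)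
    have h1 : |f' ξ| ≤ 2 * M / h := by
      rw [hξeq, abs_div, show a + h - a = h by ring, abs_of_pos hh0]
      have hnum : |f (a+h) - f a| ≤ 2 * M := by
        calc |f (a+h) - f a| ≤ |f (a+h)| + |f a| := abs_sub _ _
          _ ≤ 2*M := by linarith
      gcongr
    have h2 : |f' s - f' ξ| ≤ H * h ^ α := by
      have hle := hholder s hs ξ hξmem
      have habs : |s - ξ| ≤ h := by
        rw [abs_le]
        constructor
        · linarith [hξ.2]
        · linarith [hξ.1]
      calc |f' s - f' ξ| ≤ H * |s - ξ| ^ α := hle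
        _ ≤ H * h ^ α := by
            exact mul_le_mul_of_nonneg_left
              (Real.rpow_le_rpow (abs_nonneg _) habs hα0.le) hH
    calc |f' s| = |f' ξ + (f' s - f' ξ)| := by congr 1; ring
      _ ≤ |f' ξ| + |f' s - f' ξ| := abs_add_le _ _
      _ ≤ 2*M/h + H*h^α := add_le_add h1 h2
  refine ciSup_le ?_
  rintro ⟨s, hs⟩
  show |f' s| ≤ _
  by_cases hMz : M = 0
  · have hz : |f' s| ≤ 0 := by
      refine le_of_forall_pos_le_add fun ε hε => ?_
      rcases eq_or_lt_of_le hH with hH0 | hH0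
      · have hk := key s hs t ht le_rfl
        rw [hMz, ← hH0] at hk
        simp only [mul_zero, zero_div, zero_mul, add_zero, zero_add] at hk ⊢
        linarith
      · set h : ℝ := min t ((ε / H) ^ α⁻¹) with hhdef
        have hεH : 0 < ε / H := div_pos hε hH0
        have hh0 : 0 < h := lt_min ht (Real.rpow_pos_of_pos hεH _)
        have hht : h ≤ t := min_le_left _ _
        have hk := key s hs h hh0 hht
        rw [hMz] at hk
        have h2 : H * h ^ α ≤ ε := by
          have hle : h ^ α ≤ ((ε/H) ^ α⁻¹) ^ α :=
            Real.rpow_le_rpow hh0.le (min_le_right _ _) hα0.le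
          have heq : ((ε/H) ^ α⁻¹) ^ α = ε / H := by
            rw [← Real.rpow_mul hεH.le, inv_mul_cancel₀ hα0.ne', Real.rpow_one]
          rw [heq] at hle
          calc H * h^α ≤ H * (ε/H) := mul_le_mul_of_nonneg_left hle hH
            _ = ε := by field_simp
        have : 2 * 0 / h = (0:ℝ) := by simp
        rw [this, zero_add] at hk
        linarith
    calc |f' s| ≤ 0 := hz
      _ ≤ 4 * M * max t⁻¹ (M ^ (-β) * H ^ β) := by
          rw [hMz]; simp
  · have hMpos : 0 < M := lt_of_le_of_ne hM0 (Ne.symm hMz)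
    by_cases hcase : H * t ^ ((1:ℝ) + α) ≤ 2 * M
    · have hk := key s hs t ht le_rfl
      have ht1 : t ^ ((1:ℝ) + α) = t * t ^ α := by
        rw [Real.rpow_add ht, Real.rpow_one]
      have h2 : H * t ^ α ≤ 2 * M / t := by
        rw [le_div_iff₀ ht]
        calc H * t ^ α * t = H * (t * t ^ α) := by ring
          _ = H * t ^ ((1:ℝ)+α) := by rw [ht1]
          _ ≤ 2 * M := hcase
      calc |f' s| ≤ 2*M/t + H*t^α := hk
        _ ≤ 2*M/t + 2*M/t := by linarith
        _ = 4*M*t⁻¹ := by ring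
        _ ≤ 4*M*max t⁻¹ (M^(-β)*H^β) :=
            mul_le_mul_of_nonneg_left (le_max_left _ _) (by positivity)
    · push_neg at hcase
      have htp : 0 < t ^ ((1:ℝ)+α) := Real.rpow_pos_of_pos ht _
      have hHpos : 0 < H := by nlinarith
      set x : ℝ := 2 * M / H with hxdef
      have hx0 : 0 < x := by positivity
      set h : ℝ := x ^ β with hhdef
      have hh0 : 0 < h := Real.rpow_pos_of_pos hx0 _
      have hxt : x ≤ t ^ ((1:ℝ)+α) := by
        rw [hxdef, div_le_iff₀ hHpos]
        nlinarith
      have hht : h ≤ t := by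
        calc h ≤ (t ^ ((1:ℝ)+α)) ^ β := Real.rpow_le_rpow hx0.le hxt hβ0.le
          _ = t ^ ((1+α)*β) := (Real.rpow_mul ht.le _ _).symm
          _ = t := by
              rw [show (1+α)*β = 1 by rw [hβdef, mul_one_div, div_self h1α.ne'],
                Real.rpow_one]
      have hxβ : x ^ β = (2*M) ^ β / H ^ β := by
        rw [hxdef, Real.div_rpow (by positivity) hH]
      have e1 : 2 * M / h = (2*M) ^ (1-β) * H ^ β := by
        rw [hhdef, hxβ, div_div_eq_mul_div,
          Real.rpow_sub (by positivity : (0:ℝ) < 2*M), Real.rpow_one]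
        ring
      have hβα : β * α = 1 - β := by
        rw [hβdef]; field_simp; ring
      have hne' : H ^ (1-β) ≠ 0 := (Real.rpow_pos_of_pos hHpos _).ne'
      have h2' : H / H ^ (1-β) = H ^ β := by
        rw [div_eq_iff hne', ← Real.rpow_add hHpos,
          show β + (1-β) = (1:ℝ) by ring, Real.rpow_one]
      have e2 : H * h ^ α = (2*M) ^ (1-β) * H ^ β := by
        have hhα : h ^ α = x ^ (1 - β) := by
          rw [hhdef, ← Real.rpow_mul hx0.le, hβα]
        rw [hhα, hxdef, Real.div_rpow (by positivity) hH,
          show H * ((2*M)^(1-β) / H^(1-β)) = (2*M)^(1-β) * (H / H^(1-β)) by ring,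
          h2']
      have hsum : |f' s| ≤ 2 * ((2*M) ^ (1-β) * H ^ β) := by
        have hk := key s hs h hh0 hht
        rw [e1, e2] at hk
        linarith
      have h2M : (2*M)^(1-β) = 2^(1-β) * M^(1-β) := Real.mul_rpow (by norm_num) hM0
      have h2le : (2:ℝ)^(1-β) ≤ 2 := by
        calc (2:ℝ)^(1-β) ≤ (2:ℝ)^(1:ℝ) :=
              Real.rpow_le_rpow_of_exponent_le one_le_two (by linarith)
          _ = 2 := Real.rpow_one 2
      have hMβ : M * M ^ (-β) = M ^ (1-β) := by
        rw [show (1:ℝ)-β = 1 + (-β) by ring, Real.rpow_add hMpos, Real.rpow_one]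
      calc |f' s| ≤ 2 * ((2*M)^(1-β) * H^β) := hsum
        _ = 2 * 2^(1-β) * (M^(1-β) * H^β) := by rw [h2M]; ring
        _ ≤ 4 * (M^(1-β) * H^β) := by
            have hpos : (0:ℝ) ≤ M^(1-β) * H^β := by positivity
            nlinarith [Real.rpow_nonneg hM0 (1-β), Real.rpow_nonneg hH β]
        _ = 4 * M * (M^(-β) * H^β) := by rw [← hMβ]; ring
        _ ≤ 4 * M * max t⁻¹ (M^(-β) * H^β) :=
            mul_le_mul_of_nonneg_left (le_max_right _ _) (by positivity)
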